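/- Let f : ℝⁿ → ℝ be continuously differentiable and strongly convex with parameter ν > 0. Let x, y : ℝ → ℝⁿ be two differentiable solutions of the gradient-flow dynamics ẋ(t) = −∇f(x(t)). Then the flow is strongly contracting with rate ν with respect to the Euclidean norm: for all t ≥ 0, ‖x(t) − y(t)‖₂ ≤ e^{−νt} ‖x(0) − y(0)‖₂. -/

import Mathlib

open InnerProductSpace

local notation "⟪" a ", " b "⟫" => @inner ℝ _ _ a b

/-- directional derivative bound from strong convexity -/
lemma grad_dir_le {n : ℕ} (f : EuclideanSpace ℝ (Fin n) → ℝ) (hf : ContDiff ℝ 1 f)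
    (ν : ℝ)
    (hconv : ∀ x₁ x₂ : EuclideanSpace ℝ (Fin n), x₁ ≠ x₂ →
      ∀ α : ℝ, α ∈ Set.Icc (0 : ℝ) 1 →
        f (α • x₁ + (1 - α) • x₂) ≤
          α * f x₁ + (1 - α) * f x₂ - (ν / 2) * α * (1 - α) * ‖x₁ - x₂‖ ^ 2)
    (a b : EuclideanSpace ℝ (Fin n)) (hab : a ≠ b) :
    ⟪gradient f b, a - b⟫ ≤ f a - f b - ν / 2 * ‖a - b‖ ^ 2 := by
  set c : ℝ → EuclideanSpace ℝ (Fin n) := fun α => b + α • (a - b) with hc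
  have hcd : ∀ α : ℝ, HasDerivAt c (a - b) α := by
    intro α
    simpa [hc] using ((hasDerivAt_id α).smul_const (a - b)).const_add b
  have hgb : HasGradientAt f (gradient f b) b :=
    ((hf.differentiable one_ne_zero) b).hasGradientAt
  have hgb' : HasFDerivAt f (toDual ℝ _ (gradient f b)) (c 0) := by
    simpa [hc] using hgb.hasFDerivAt
  have hφ : HasDerivAt (fun α => f (c α)) ⟪gradient f b, a - b⟫ 0 := by
    have := hgb'.comp_hasDerivAt 0 (hcd 0)
    exact this
  have hslope : Filter.Tendsto (slope (fun α => f (c α)) 0) (nhdsWithin 0 (Set.Ioi 0))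
      (nhds ⟪gradient f b, a - b⟫) :=
    (hasDerivAt_iff_tendsto_slope.mp hφ).mono_left
      (nhdsWithin_mono _ (fun x hx => ne_of_gt hx))
  have hψ : Filter.Tendsto (fun α : ℝ => f a - f b - ν / 2 * (1 - α) * ‖a - b‖ ^ 2)
      (nhdsWithin 0 (Set.Ioi 0)) (nhds (f a - f b - ν / 2 * ‖a - b‖ ^ 2)) := by
    have : Filter.Tendsto (fun α : ℝ => f a - f b - ν / 2 * (1 - α) * ‖a - b‖ ^ 2)
        (nhds 0) (nhds (f a - f b - ν / 2 * (1 - 0) * ‖a - b‖ ^ 2)) := by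
      apply Continuous.tendsto
      continuity
    simpa using this.mono_left nhdsWithin_le_nhds
  refine le_of_tendsto_of_tendsto hslope hψ ?_
  have hmem : Set.Ioc (0:ℝ) 1 ∈ nhdsWithin (0:ℝ) (Set.Ioi 0) :=
    Ioc_mem_nhdsGT_of_mem ⟨le_rfl, one_pos⟩
  filter_upwards [hmem] with α hα
  have hα0 : 0 < α := hα.1
  have key := hconv a b hab α ⟨le_of_lt hα0, hα.2⟩
  have hcα : c α = α • a + (1 - α) • b := by
    simp [hc, smul_sub, sub_smul]
    abel
  have hc0 : f (c 0) = f b := by simp [hc]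
  rw [slope_def_field, sub_zero, hc0, div_le_iff₀ hα0]
  rw [hcα]
  nlinarith [key]

/-- monotonicity of the gradient of a strongly convex function -/
lemma grad_mono {n : ℕ} (f : EuclideanSpace ℝ (Fin n) → ℝ) (hf : ContDiff ℝ 1 f)
    (ν : ℝ)
    (hconv : ∀ x₁ x₂ : EuclideanSpace ℝ (Fin n), x₁ ≠ x₂ →
      ∀ α : ℝ, α ∈ Set.Icc (0 : ℝ) 1 →
        f (α • x₁ + (1 - α) • x₂) ≤
          α * f x₁ + (1 - α) * f x₂ - (ν / 2) * α * (1 - α) * ‖x₁ - x₂‖ ^ 2)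
    (a b : EuclideanSpace ℝ (Fin n)) :
    ν * ‖a - b‖ ^ 2 ≤ ⟪gradient f a - gradient f b, a - b⟫ := by
  rcases eq_or_ne a b with h | h
  · simp [h]
  · have h1 := grad_dir_le f hf ν hconv a b h
    have h2 := grad_dir_le f hf ν hconv b a h.symm
    have hba : b - a = -(a - b) := by abel
    rw [hba, inner_neg_right, norm_neg] at h2
    rw [inner_sub_left]
    linarith

theorem gradient_flow_contracting
    {n : ℕ} (f : EuclideanSpace ℝ (Fin n) → ℝ) (hf : ContDiff ℝ 1 f)
    (ν : ℝ) (hν : 0 < ν)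
    (hconv : ∀ x₁ x₂ : EuclideanSpace ℝ (Fin n), x₁ ≠ x₂ →
      ∀ α : ℝ, α ∈ Set.Icc (0 : ℝ) 1 →
        f (α • x₁ + (1 - α) • x₂) ≤
          α * f x₁ + (1 - α) * f x₂ - (ν / 2) * α * (1 - α) * ‖x₁ - x₂‖ ^ 2)
    (x y : ℝ → EuclideanSpace ℝ (Fin n))
    (hx : ∀ t : ℝ, HasDerivAt x (-gradient f (x t)) t)
    (hy : ∀ t : ℝ, HasDerivAt y (-gradient f (y t)) t) :
    ∀ t : ℝ, 0 ≤ t → ‖x t - y t‖ ≤ Real.exp (-ν * t) * ‖x 0 - y 0‖ := by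
  set w : ℝ → EuclideanSpace ℝ (Fin n) := fun t => x t - y t with hw
  have hwd : ∀ t, HasDerivAt w (-(gradient f (x t) - gradient f (y t))) t := by
    intro t
    have h := (hx t).sub (hy t)
    have heq : -gradient f (x t) - -gradient f (y t)
        = -(gradient f (x t) - gradient f (y t)) := by abel
    rw [heq] at h
    exact h
  set u : ℝ → ℝ := fun t => Real.exp (2 * ν * t) * ⟪w t, w t⟫ with hu
  have hud : ∀ t, HasDerivAt u
      (Real.exp (2 * ν * t) * (2 * ν) * ⟪w t, w t⟫ +
        Real.exp (2 * ν * t) * (⟪w t, -(gradient f (x t) - gradient f (y t))⟫ +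
          ⟪-(gradient f (x t) - gradient f (y t)), w t⟫)) t := by
    intro t
    have he : HasDerivAt (fun s => Real.exp (2 * ν * s)) (Real.exp (2 * ν * t) * (2 * ν)) t := by
      have := ((hasDerivAt_id t).const_mul (2 * ν)).exp
      simpa using this
    have hi : HasDerivAt (fun t => (⟪w t, w t⟫ : ℝ))
        (⟪w t, -(gradient f (x t) - gradient f (y t))⟫ +
          ⟪-(gradient f (x t) - gradient f (y t)), w t⟫) t :=
      HasDerivAt.inner ℝ (hwd t) (hwd t)
    exact he.mul hi
  have hu' : ∀ t, deriv u t ≤ 0 := by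
    intro t
    rw [(hud t).deriv]
    have hmono := grad_mono f hf ν hconv (x t) (y t)
    have hwt : (x t - y t) = w t := rfl
    rw [hwt] at hmono
    have hinn : (⟪w t, w t⟫ : ℝ) = ‖w t‖ ^ 2 := real_inner_self_eq_norm_sq (w t)
    have h1 : (⟪w t, -(gradient f (x t) - gradient f (y t))⟫ : ℝ) ≤ -(ν * ‖w t‖ ^ 2) := by
      rw [inner_neg_right, real_inner_comm]
      linarith
    have h2 : (⟪-(gradient f (x t) - gradient f (y t)), w t⟫ : ℝ) ≤ -(ν * ‖w t‖ ^ 2) := by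
      rw [inner_neg_left]
      linarith
    have hexp : 0 < Real.exp (2 * ν * t) := Real.exp_pos _
    rw [hinn]
    have key : Real.exp (2 * ν * t) *
        (⟪w t, -(gradient f (x t) - gradient f (y t))⟫ +
          ⟪-(gradient f (x t) - gradient f (y t)), w t⟫)
        ≤ Real.exp (2 * ν * t) * (-(2 * ν) * ‖w t‖ ^ 2) := by
      apply mul_le_mul_of_nonneg_left _ hexp.le
      linarith
    have h0 : Real.exp (2 * ν * t) * (2 * ν) * ‖w t‖ ^ 2 +
        Real.exp (2 * ν * t) * (-(2 * ν) * ‖w t‖ ^ 2) = 0 := by ring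
    linarith
  have hanti : Antitone u :=
    antitone_of_deriv_nonpos (fun t => (hud t).differentiableAt) hu'
  intro t ht
  have hle : u t ≤ u 0 := hanti ht
  have hinnt : (⟪w t, w t⟫ : ℝ) = ‖w t‖ ^ 2 := real_inner_self_eq_norm_sq (w t)
  have hinn0 : (⟪w 0, w 0⟫ : ℝ) = ‖w 0‖ ^ 2 := real_inner_self_eq_norm_sq (w 0)
  rw [hu] at hle
  simp only [hinnt, hinn0, mul_zero, Real.exp_zero, one_mul] at hle
  have hexp : 0 < Real.exp (2 * ν * t) := Real.exp_pos _
  have hsq : ‖w t‖ ^ 2 ≤ (Real.exp (-ν * t) * ‖w 0‖) ^ 2 := by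
    have hrw : (Real.exp (-ν * t) * ‖w 0‖) ^ 2
        = (Real.exp (2 * ν * t))⁻¹ * ‖w 0‖ ^ 2 := by
      rw [mul_pow, sq (Real.exp (-ν * t)), ← Real.exp_add, ← Real.exp_neg]
      congr 2
      ring
    rw [hrw]
    have h3 := mul_le_mul_of_nonneg_left hle (inv_nonneg.mpr hexp.le)
    calc ‖w t‖ ^ 2
        = (Real.exp (2 * ν * t))⁻¹ * (Real.exp (2 * ν * t) * ‖w t‖ ^ 2) := by
          field_simp
      _ ≤ (Real.exp (2 * ν * t))⁻¹ * ‖w 0‖ ^ 2 := h3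
  have h1 : 0 ≤ Real.exp (-ν * t) * ‖w 0‖ := by positivity
  have hs := Real.sqrt_le_sqrt hsq
  rw [Real.sqrt_sq (norm_nonneg _), Real.sqrt_sq h1] at hs
  exact hs
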